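/- If an affine commutative Poisson algebra Z₀ has only finitely many Poisson primitive ideals, then every prime Poisson ideal of Z₀ is Poisson primitive, and in particular the set of prime Poisson ideals is finite. -/
import Mathlib


/-- If an affine commutative Poisson algebra `Z₀` over a field of characteristic `0` has only
finitely many Poisson primitive ideals, then every prime Poisson ideal of `Z₀` is Poisson
primitive, and in particular the set of prime Poisson ideals is finite. -/
theorem finitely_many_poisson_primitives
    (k : Type*) [Field k] [CharZero k]
    (Z₀ : Type*) [CommRing Z₀] [Algebra k Z₀] [Algebra.FiniteType k Z₀]
    (bracket : Z₀ → Z₀ → Z₀)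
    (hadd_l : ∀ a b c : Z₀, bracket (a + b) c = bracket a c + bracket b c)
    (hadd_r : ∀ a b c : Z₀, bracket a (b + c) = bracket a b + bracket a c)
    (hsmul_l : ∀ (r : k) (a b : Z₀), bracket (r • a) b = r • bracket a b)
    (hsmul_r : ∀ (r : k) (a b : Z₀), bracket a (r • b) = r • bracket a b)
    (hleib_r : ∀ a b c : Z₀, bracket a (b * c) = bracket a b * c + b * bracket a c)
    (hanti : ∀ a b : Z₀, bracket a b = - bracket b a)
    (PoissonPrimitive : Ideal Z₀ → Prop)
    (hPP : ∀ p : Ideal Z₀, PoissonPrimitive p ↔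
      ∃ m : Ideal Z₀, m.IsMaximal ∧
        (∀ z : Z₀, ∀ a ∈ p, bracket z a ∈ p) ∧ p ≤ m ∧
        (∀ Q : Ideal Z₀, (∀ z : Z₀, ∀ a ∈ Q, bracket z a ∈ Q) → Q ≤ m → Q ≤ p))
    (hfin : {p : Ideal Z₀ | PoissonPrimitive p}.Finite) :
    (∀ p : Ideal Z₀, p.IsPrime → (∀ z : Z₀, ∀ a ∈ p, bracket z a ∈ p) →
      PoissonPrimitive p) ∧
    {p : Ideal Z₀ | p.IsPrime ∧ ∀ z : Z₀, ∀ a ∈ p, bracket z a ∈ p}.Finite := by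
  classical
  haveI : IsJacobsonRing Z₀ := isJacobsonRing_of_finiteType (A := k)
  -- bracket of zero
  have hz : ∀ z : Z₀, bracket z 0 = 0 := by
    intro z
    have := hadd_r z 0 0
    simpa using this.symm
  -- Poisson core of a maximal ideal
  set IsPoisson : Ideal Z₀ → Prop := fun I => ∀ z : Z₀, ∀ a ∈ I, bracket z a ∈ I with hIsP
  set core : Ideal Z₀ → Ideal Z₀ :=
    fun m => sSup {I : Ideal Z₀ | IsPoisson I ∧ I ≤ m} with hcore
  have hdir : ∀ m : Ideal Z₀, DirectedOn (· ≤ ·) {I : Ideal Z₀ | IsPoisson I ∧ I ≤ m} := by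
    intro m I hI J hJ
    refine ⟨I ⊔ J, ⟨?_, sup_le hI.2 hJ.2⟩, le_sup_left, le_sup_right⟩
    intro z a ha
    rcases Submodule.mem_sup.mp ha with ⟨x, hx, y, hy, rfl⟩
    rw [hadd_r]
    exact Submodule.add_mem_sup (hI.1 z x hx) (hJ.1 z y hy)
  have hne : ∀ m : Ideal Z₀, (⊥ : Ideal Z₀) ∈ {I : Ideal Z₀ | IsPoisson I ∧ I ≤ m} := by
    intro m
    refine ⟨?_, bot_le⟩
    intro z a ha
    rw [Ideal.mem_bot] at ha ⊢
    rw [ha, hz]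
  have hcoreP : ∀ m : Ideal Z₀, IsPoisson (core m) := by
    intro m z a ha
    rcases (Submodule.mem_sSup_of_directed ⟨_, hne m⟩ (hdir m)).mp ha with ⟨I, hI, haI⟩
    exact le_sSup hI (hI.1 z a haI)
  have hcorele : ∀ m : Ideal Z₀, core m ≤ m := fun m => sSup_le fun I hI => hI.2
  have hcoremax : ∀ m, ∀ Q : Ideal Z₀, IsPoisson Q → Q ≤ m → Q ≤ core m :=
    fun m Q hQ hQm => le_sSup ⟨hQ, hQm⟩
  have hcoreprim : ∀ m : Ideal Z₀, m.IsMaximal → PoissonPrimitive (core m) := by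
    intro m hm
    exact (hPP _).mpr ⟨m, hm, hcoreP m, hcorele m, hcoremax m⟩
  -- main claim
  have main : ∀ p : Ideal Z₀, p.IsPrime → IsPoisson p → PoissonPrimitive p := by
    intro p hp hpP
    -- p = jacobson p = sInf of maximals above
    have hjac : p.jacobson = p := isJacobsonRing_iff_prime_eq.mp ‹_› p hp
    -- the set of cores of maximals above p
    set T : Set (Ideal Z₀) := (fun m => core m) '' {m : Ideal Z₀ | p ≤ m ∧ m.IsMaximal} with hT
    have hTsub : T ⊆ {q : Ideal Z₀ | PoissonPrimitive q} := by
      rintro q ⟨m, hm, rfl⟩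
      exact hcoreprim m hm.2
    have hTfin : T.Finite := hfin.subset hTsub
    have hpleT : ∀ q ∈ T, p ≤ q := by
      rintro q ⟨m, hm, rfl⟩
      exact hcoremax m p hpP hm.1
    have hsInfT : sInf T ≤ p := by
      calc sInf T ≤ p.jacobson := by
            refine le_sInf ?_
            rintro m ⟨hpm, hm⟩
            exact le_trans (sInf_le ⟨m, ⟨hpm, hm⟩, rfl⟩) (hcorele m)
        _ = p := hjac
    -- finite inf below prime: some q ≤ p
    have : (hTfin.toFinset.inf id) ≤ p := by
      rwa [Finset.inf_id_eq_sInf, hTfin.coe_toFinset]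
    rcases (Ideal.IsPrime.inf_le' hp).mp this with ⟨q, hqT, hqp⟩
    rw [hTfin.mem_toFinset] at hqT
    have : q = p := le_antisymm hqp (hpleT q hqT)
    rcases hqT with ⟨m, _, rfl⟩
    rw [← this]
    exact hTsub ⟨m, ‹_›, rfl⟩
  refine ⟨main, hfin.subset ?_⟩
  rintro p ⟨hp, hpP⟩
  exact main p hp hpP
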